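/- arXiv:1912.10743 — 2 statements merged into one kernel-verified Lean document; each statement's English description precedes it below -/
import Mathlib

section
/- Let M be a self-adjoint n×n matrix over ℍ_ℂ and let P_{ij} be the n×n permutation matrix of the transposition (i j). Then P_{ij} M P_{ij} (the matrix obtained by switching column i with column j and row i with row j) is self-adjoint and Qdet(P_{ij} M P_{ij}) = Qdet M. -/
open Quaternion Matrix

/-- The complexified quaternions `ℍ_ℂ`. -/
abbrev HC : Type := QuaternionAlgebra ℂ (-1) 0 (-1)

/-- The factor of the Moore-Dyson quaternion determinant corresponding to the cycle of `σ`
through `x`, the cycle being written starting at `x`: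
`M_{x, σx} M_{σx, σ²x} ⋯ M_{σ^{s-1}x, x}` where `s` is the length of the cycle. -/
noncomputable def cycFac {n : ℕ} (M : Matrix (Fin n) (Fin n) HC) (σ : Equiv.Perm (Fin n))
    (x : Fin n) : HC :=
  ((List.range (orderOf (σ.cycleOf x))).map (fun t => M ((σ ^ t) x) ((σ ^ (t + 1)) x))).prod

open scoped Classical in
/-- The term `M_σ` of the Moore-Dyson quaternion determinant: the product over the cycles of `σ`,
each cycle starting at its largest element, the cycles being ordered by decreasing largest
element (cycles of length one are included). -/
noncomputable def permFac {n : ℕ} (M : Matrix (Fin n) (Fin n) HC) (σ : Equiv.Perm (Fin n)) : HC :=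
  (((Finset.univ.filter (fun x : Fin n => ∀ y : Fin n, σ.SameCycle x y → y ≤ x)).sort
      (· ≤ ·)).reverse.map (cycFac M σ)).prod

/-- The Moore-Dyson quaternion determinant `Qdet M = Σ_{σ ∈ S_n} sgn(σ) M_σ`. -/
noncomputable def Qdet {n : ℕ} (M : Matrix (Fin n) (Fin n) HC) : HC :=
  ∑ σ : Equiv.Perm (Fin n), ((Equiv.Perm.sign σ : ℤ) : HC) * permFac M σ

/-- A square quaternion matrix is self-adjoint if `M i j = conj (M j i)` for all `i, j`. -/
def IsSelfAdjointQ {n : ℕ} (M : Matrix (Fin n) (Fin n) HC) : Prop :=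
  ∀ i j, M i j = star (M j i)

namespace QdetAux

open Equiv Equiv.Perm

variable {n : ℕ}

/-! ### Quaternion basics -/

lemma re_mul_comm (a b : HC) : (a * b).re = (b * a).re := by
  rw [QuaternionAlgebra.re_mul, QuaternionAlgebra.re_mul]; ring

lemma eq_coe_re_of_star_eq {a : HC} (h : a = star a) : a = ((a.re : ℂ) : HC) := by
  have h2 : a.imI = -a.imI := congrArg QuaternionAlgebra.imI h
  have h3 : a.imJ = -a.imJ := congrArg QuaternionAlgebra.imJ h
  have h4 : a.imK = -a.imK := congrArg QuaternionAlgebra.imK h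
  have e2 : a.imI = 0 := by linear_combination h2 / 2
  have e3 : a.imJ = 0 := by linear_combination h3 / 2
  have e4 : a.imK = 0 := by linear_combination h4 / 2
  ext
  · exact (QuaternionAlgebra.re_coe _).symm
  · exact e2.trans (QuaternionAlgebra.imI_coe _).symm
  · exact e3.trans (QuaternionAlgebra.imJ_coe _).symm
  · exact e4.trans (QuaternionAlgebra.imK_coe _).symm

lemma star_list_prod (l : List HC) : star l.prod = (l.reverse.map star).prod := by
  induction l with
  | nil => simp
  | cons a t ih => simp [StarMul.star_mul, ih]

/-! ### Cycle products -/

/-- The cycle product written in terms of a permutation `c` (intended: `σ.cycleOf x`). -/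
noncomputable def cprod (M : Matrix (Fin n) (Fin n) HC) (c : Equiv.Perm (Fin n)) (x : Fin n) :
    HC :=
  ((List.range (orderOf c)).map (fun t => M ((c ^ t) x) ((c ^ (t + 1)) x))).prod

lemma cycFac_eq_cprod (M : Matrix (Fin n) (Fin n) HC) (σ : Equiv.Perm (Fin n)) (x : Fin n) :
    cycFac M σ x = cprod M (σ.cycleOf x) x := by
  unfold cycFac cprod
  congr 1
  exact List.map_congr_left fun t _ => by
    rw [Equiv.Perm.cycleOf_pow_apply_self, Equiv.Perm.cycleOf_pow_apply_self]

lemma cprod_inv {M : Matrix (Fin n) (Fin n) HC} (hM : IsSelfAdjointQ M)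
    (c : Equiv.Perm (Fin n)) (x : Fin n) : cprod M c⁻¹ x = star (cprod M c x) := by
  unfold cprod
  rw [star_list_prod, ← List.map_reverse, List.map_map, orderOf_inv]
  congr 1
  apply List.ext_getElem
  · simp
  · intro t h1 h2
    simp only [List.getElem_map, List.getElem_range, List.getElem_reverse, List.length_map,
      List.length_range, Function.comp_apply]
    have ht : t < orderOf c := by simpa using h1
    have hs : c ^ orderOf c = 1 := pow_orderOf_eq_one c
    have e1 : c ^ (orderOf c - 1 - t) = c⁻¹ ^ (t + 1) := by
      have : orderOf c - 1 - t = orderOf c - (t + 1) := by omega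
      rw [this, pow_sub c (by omega), hs, one_mul, ← inv_pow]
    have e2 : c ^ (orderOf c - 1 - t + 1) = c⁻¹ ^ t := by
      have : orderOf c - 1 - t + 1 = orderOf c - t := by omega
      rw [this, pow_sub c (by omega), hs, one_mul, ← inv_pow]
    rw [← hM, e1, e2]

lemma cprod_rot_re (M : Matrix (Fin n) (Fin n) HC) (c : Equiv.Perm (Fin n)) (x : Fin n) :
    (cprod M c (c x)).re = (cprod M c x).re := by
  set f : ℕ → HC := fun t => M ((c ^ t) x) ((c ^ (t + 1)) x) with hf
  unfold cprod
  rcases h : orderOf c with _ | s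
  · simp
  · have hc : c ^ (s + 1) = 1 := h ▸ pow_orderOf_eq_one c
    have hcx : ∀ t : ℕ, (c ^ t) (c x) = (c ^ (t + 1)) x := by
      intro t; rw [pow_succ, Equiv.Perm.mul_apply]
    have hfs : f (s + 1) = f 0 := by
      have hx1 : (c ^ (s + 1)) x = x := by rw [hc]; rfl
      have hx2 : (c ^ (s + 1 + 1)) x = (c ^ 1) x := by
        rw [pow_succ', Equiv.Perm.mul_apply, hx1, pow_one]
      simp only [hf, hx1, hx2, pow_one, pow_zero, zero_add]
      rfl
    have L1 : (List.range (s + 1)).map (fun t => M ((c ^ t) (c x)) ((c ^ (t + 1)) (c x)))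
        = ((List.range s).map (fun t => f (t + 1))) ++ [f 0] := by
      have e0 : (List.range (s + 1)).map (fun t => M ((c ^ t) (c x)) ((c ^ (t + 1)) (c x)))
          = (List.range (s + 1)).map (fun t => f (t + 1)) :=
        List.map_congr_left fun t _ => by rw [hcx, hcx]
      rw [e0, List.range_succ, List.map_append, hfs.symm]
      rfl
    have L2 : (List.range (s + 1)).map f = f 0 :: (List.range s).map (fun t => f (t + 1)) := by
      rw [List.range_succ_eq_map, List.map_cons, List.map_map]
      rfl
    rw [L1, L2, List.prod_append, List.prod_cons, List.prod_cons, List.prod_nil, mul_one]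
    exact re_mul_comm _ _

lemma cycFac_apply_re (M : Matrix (Fin n) (Fin n) HC) (σ : Equiv.Perm (Fin n)) (x : Fin n) :
    (cycFac M σ (σ x)).re = (cycFac M σ x).re := by
  rw [cycFac_eq_cprod, cycFac_eq_cprod, Equiv.Perm.cycleOf_self_apply]
  have : σ x = (σ.cycleOf x) x := (Equiv.Perm.cycleOf_apply_self σ x).symm
  rw [this]
  exact cprod_rot_re M _ x

lemma cycFac_re_of_sameCycle (M : Matrix (Fin n) (Fin n) HC) {σ : Equiv.Perm (Fin n)}
    {x y : Fin n} (h : σ.SameCycle x y) : (cycFac M σ y).re = (cycFac M σ x).re := by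
  obtain ⟨k, -, rfl⟩ := h.exists_pow_eq'
  clear h
  induction k with
  | zero => rfl
  | succ m ih =>
    have e : (σ ^ (m + 1)) x = σ ((σ ^ m) x) := by rw [pow_succ', Equiv.Perm.mul_apply]
    rw [e, cycFac_apply_re, ih]

/-! ### Short cycles are central -/

lemma cycFac_short {M : Matrix (Fin n) (Fin n) HC} (hM : IsSelfAdjointQ M)
    {σ : Equiv.Perm (Fin n)} {x : Fin n} (h : orderOf (σ.cycleOf x) ≤ 2) :
    cycFac M σ x = (((cycFac M σ x).re : ℂ) : HC) := by
  apply eq_coe_re_of_star_eq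
  rw [cycFac_eq_cprod]
  set c := σ.cycleOf x with hc
  have hpos : 0 < orderOf c := orderOf_pos c
  rcases (by omega : orderOf c = 1 ∨ orderOf c = 2) with h1 | h2
  · have hc1 : c = 1 := orderOf_eq_one_iff.mp h1
    have : cprod M c x = M x x := by
      unfold cprod
      rw [h1]
      simp [hc1]
    rw [this]
    exact hM x x
  · have hx2 : (c ^ 2) x = x := by rw [← h2, pow_orderOf_eq_one]; rfl
    have : cprod M c x = M x (c x) * M (c x) x := by
      unfold cprod
      rw [h2]
      simp [List.range_succ, hx2]
    rw [this, StarMul.star_mul, ← hM, ← hM]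

/-! ### Reversing a single cycle -/

/-- The permutation obtained from `σ` by reversing the cycle through `r`. -/
noncomputable def revAt (σ : Equiv.Perm (Fin n)) (r : Fin n) : Equiv.Perm (Fin n) :=
  σ * (σ.cycleOf r)⁻¹ ^ 2

lemma cycleOf_inv_apply_of_not {σ : Equiv.Perm (Fin n)} {r w : Fin n}
    (h : ¬ σ.SameCycle r w) : (σ.cycleOf r)⁻¹ w = w := by
  have h1 : σ.cycleOf r w = w := Equiv.Perm.cycleOf_apply_of_not_sameCycle h
  conv_lhs => rw [← h1]
  exact (σ.cycleOf r).symm_apply_apply w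

lemma cycleOf_inv_apply_of_mem {σ : Equiv.Perm (Fin n)} {r w : Fin n}
    (h : σ.SameCycle r w) : (σ.cycleOf r)⁻¹ w = σ⁻¹ w := by
  have h1 : σ.cycleOf r (σ⁻¹ w) = w := by
    rw [Equiv.Perm.SameCycle.cycleOf_apply (show σ.SameCycle r (σ⁻¹ w) from h.symm_apply_right),
      show σ (σ⁻¹ w) = w from σ.apply_symm_apply w]
  conv_lhs => rw [← h1]
  exact (σ.cycleOf r).symm_apply_apply _

lemma revAt_apply_of_not {σ : Equiv.Perm (Fin n)} {r w : Fin n}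
    (h : ¬ σ.SameCycle r w) : revAt σ r w = σ w := by
  unfold revAt
  rw [sq]
  simp only [Equiv.Perm.mul_apply]
  rw [cycleOf_inv_apply_of_not h, cycleOf_inv_apply_of_not h]

lemma revAt_apply_of_mem {σ : Equiv.Perm (Fin n)} {r w : Fin n}
    (h : σ.SameCycle r w) : revAt σ r w = σ⁻¹ w := by
  unfold revAt
  rw [sq]
  simp only [Equiv.Perm.mul_apply]
  rw [cycleOf_inv_apply_of_mem h, cycleOf_inv_apply_of_mem (show σ.SameCycle r (σ⁻¹ w) from h.symm_apply_right),
    show σ (σ⁻¹ (σ⁻¹ w)) = σ⁻¹ w from σ.apply_symm_apply (σ⁻¹ w)]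

lemma sameCycle_mono {f g : Equiv.Perm (Fin n)} (h : ∀ w, f.SameCycle w (g w)) {y z : Fin n} :
    g.SameCycle y z → f.SameCycle y z := by
  intro hyz
  obtain ⟨k, -, rfl⟩ := hyz.exists_pow_eq'
  clear hyz
  induction k with
  | zero => exact Equiv.Perm.SameCycle.refl _ _
  | succ m ih =>
    have e : (g ^ (m + 1)) y = g ((g ^ m) y) := by rw [pow_succ', Equiv.Perm.mul_apply]
    rw [e]
    exact ih.trans (h _)

lemma sameCycle_revAt (σ : Equiv.Perm (Fin n)) (r : Fin n) {y z : Fin n} :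
    (revAt σ r).SameCycle y z ↔ σ.SameCycle y z := by
  constructor
  · apply sameCycle_mono
    intro w
    by_cases hw : σ.SameCycle r w
    · rw [revAt_apply_of_mem hw]
      exact (Equiv.Perm.sameCycle_symm_apply_right).mpr (Equiv.Perm.SameCycle.refl _ _)
    · rw [revAt_apply_of_not hw]
      exact (Equiv.Perm.sameCycle_apply_right).mpr (Equiv.Perm.SameCycle.refl _ _)
  · apply sameCycle_mono
    intro w
    by_cases hw : σ.SameCycle r w
    · have h1 : revAt σ r (σ w) = w := by
        rw [revAt_apply_of_mem (hw.apply_right), show σ⁻¹ (σ w) = w from σ.symm_apply_apply w]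
      have h2 : σ w = (revAt σ r)⁻¹ w := by
        conv_rhs => rw [← h1]
        exact ((revAt σ r).symm_apply_apply (σ w)).symm
      rw [h2]
      exact (Equiv.Perm.sameCycle_symm_apply_right).mpr (Equiv.Perm.SameCycle.refl _ _)
    · rw [← revAt_apply_of_not hw]
      exact (Equiv.Perm.sameCycle_apply_right).mpr (Equiv.Perm.SameCycle.refl _ _)

lemma cycleOf_revAt_self (σ : Equiv.Perm (Fin n)) (r : Fin n) :
    (revAt σ r).cycleOf r = (σ.cycleOf r)⁻¹ := by
  ext z
  rw [Equiv.Perm.cycleOf_inv, Equiv.Perm.cycleOf_apply, Equiv.Perm.cycleOf_apply]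
  by_cases hz : σ.SameCycle r z
  · rw [if_pos ((sameCycle_revAt σ r).mpr hz), if_pos (Equiv.Perm.sameCycle_inv.mpr hz),
      revAt_apply_of_mem hz]
  · rw [if_neg (fun hc => hz ((sameCycle_revAt σ r).mp hc)),
      if_neg (fun hc => hz (Equiv.Perm.sameCycle_inv.mp hc))]

lemma cycleOf_revAt_other {σ : Equiv.Perm (Fin n)} {r y : Fin n} (h : ¬ σ.SameCycle r y) :
    (revAt σ r).cycleOf y = σ.cycleOf y := by
  ext z
  rw [Equiv.Perm.cycleOf_apply, Equiv.Perm.cycleOf_apply]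
  by_cases hz : σ.SameCycle y z
  · rw [if_pos ((sameCycle_revAt σ r).mpr hz), if_pos hz,
      revAt_apply_of_not (fun hc => h (hc.trans hz.symm))]
  · rw [if_neg (fun hc => hz ((sameCycle_revAt σ r).mp hc)), if_neg hz]

lemma revAt_revAt (σ : Equiv.Perm (Fin n)) (r : Fin n) : revAt (revAt σ r) r = σ := by
  rw [show revAt (revAt σ r) r = revAt σ r * ((revAt σ r).cycleOf r)⁻¹ ^ 2 from rfl,
    cycleOf_revAt_self]
  unfold revAt
  group

lemma sign_revAt (σ : Equiv.Perm (Fin n)) (r : Fin n) :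
    Equiv.Perm.sign (revAt σ r) = Equiv.Perm.sign σ := by
  unfold revAt
  rw [_root_.map_mul, _root_.map_pow, Int.units_sq, mul_one]

lemma revAt_ne {σ : Equiv.Perm (Fin n)} {r : Fin n} (h3 : 3 ≤ orderOf (σ.cycleOf r)) :
    revAt σ r ≠ σ := by
  intro heq
  have hσr : σ r ≠ r := by
    intro hfix
    have : σ.cycleOf r = 1 := (Equiv.Perm.cycleOf_eq_one_iff σ).mpr hfix
    rw [this, orderOf_one] at h3
    omega
  have hcyc : (σ.cycleOf r).IsCycle := Equiv.Perm.isCycle_cycleOf σ hσr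
  have h1 : σ⁻¹ r = σ r := by
    rw [← revAt_apply_of_mem (Equiv.Perm.SameCycle.refl σ r), heq]
  have h2 : (σ ^ 2) r = r := by
    have := congrArg σ h1
    rw [show σ (σ⁻¹ r) = r from σ.apply_symm_apply r] at this
    rw [sq, Equiv.Perm.mul_apply, ← this]
  have hc2 : (σ.cycleOf r ^ 2) r = r := by
    rw [Equiv.Perm.cycleOf_pow_apply_self, h2]
  have hcr : σ.cycleOf r r ≠ r := by
    rw [Equiv.Perm.cycleOf_apply_self]
    exact hσr
  have : σ.cycleOf r ^ 2 = 1 := (hcyc.pow_eq_one_iff' hcr).mpr hc2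
  have hdvd := orderOf_dvd_of_pow_eq_one this
  have := Nat.le_of_dvd (by omega) hdvd
  omega

lemma cycFac_revAt_self {M : Matrix (Fin n) (Fin n) HC} (hM : IsSelfAdjointQ M)
    (σ : Equiv.Perm (Fin n)) (r : Fin n) :
    cycFac M (revAt σ r) r = star (cycFac M σ r) := by
  rw [cycFac_eq_cprod, cycFac_eq_cprod, cycleOf_revAt_self]
  exact cprod_inv hM _ r

lemma cycFac_revAt_other {M : Matrix (Fin n) (Fin n) HC} {σ : Equiv.Perm (Fin n)} {r y : Fin n}
    (h : ¬ σ.SameCycle r y) : cycFac M (revAt σ r) y = cycFac M σ y := by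
  rw [cycFac_eq_cprod, cycFac_eq_cprod, cycleOf_revAt_other h]

/-! ### The hybrid sums -/

open scoped Classical in
/-- The representatives (largest elements) of the cycles of `σ`. -/
noncomputable def reps (σ : Equiv.Perm (Fin n)) : Finset (Fin n) :=
  Finset.univ.filter (fun x : Fin n => ∀ y : Fin n, σ.SameCycle x y → y ≤ x)

lemma mem_reps {σ : Equiv.Perm (Fin n)} {x : Fin n} :
    x ∈ reps σ ↔ ∀ y : Fin n, σ.SameCycle x y → y ≤ x := by
  simp [reps]

lemma reps_eq_of_sameCycle {σ : Equiv.Perm (Fin n)} {x y : Fin n} (hx : x ∈ reps σ)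
    (hy : y ∈ reps σ) (h : σ.SameCycle x y) : x = y :=
  le_antisymm (mem_reps.mp hy x h.symm) (mem_reps.mp hx y h)

lemma reps_revAt (σ : Equiv.Perm (Fin n)) (r : Fin n) : reps (revAt σ r) = reps σ := by
  ext x
  rw [mem_reps, mem_reps]
  exact forall_congr' fun y => by rw [sameCycle_revAt]

open scoped Classical in
/-- Hybrid version of `permFac` where the cycles with representative in `S` have been replaced
by their (complex, hence central) real part. -/
noncomputable def hyb (M : Matrix (Fin n) (Fin n) HC) (S : Finset (Fin n))
    (σ : Equiv.Perm (Fin n)) : HC :=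
  (((reps σ).sort (· ≤ ·)).reverse.map
    (fun x => if x ∈ S then (((cycFac M σ x).re : ℂ) : HC) else cycFac M σ x)).prod

lemma permFac_eq_hyb (M : Matrix (Fin n) (Fin n) HC) (σ : Equiv.Perm (Fin n)) :
    permFac M σ = hyb M ∅ σ := by
  unfold permFac hyb reps
  simp

lemma mem_of_mem_sortrev {σ : Equiv.Perm (Fin n)} {x : Fin n}
    (hx : x ∈ ((reps σ).sort (· ≤ ·)).reverse) : x ∈ reps σ :=
  Finset.mem_sort (α := Fin n) (· ≤ ·) |>.mp (List.mem_reverse.mp hx)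

lemma hyb_step {M : Matrix (Fin n) (Fin n) HC} (hM : IsSelfAdjointQ M) (S : Finset (Fin n))
    (r : Fin n) :
    ∑ σ : Equiv.Perm (Fin n), ((Equiv.Perm.sign σ : ℤ) : HC) * hyb M S σ
      = ∑ σ : Equiv.Perm (Fin n), ((Equiv.Perm.sign σ : ℤ) : HC) * hyb M (insert r S) σ := by
  classical
  by_cases hrS : r ∈ S
  · rw [Finset.insert_eq_self.mpr hrS]
  rw [← sub_eq_zero, ← Finset.sum_sub_distrib]
  set F : Equiv.Perm (Fin n) → HC := fun σ =>
    ((Equiv.Perm.sign σ : ℤ) : HC) * hyb M S σ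
      - ((Equiv.Perm.sign σ : ℤ) : HC) * hyb M (insert r S) σ with hF
  set C : Equiv.Perm (Fin n) → Prop := fun σ => r ∈ reps σ ∧ 3 ≤ orderOf (σ.cycleOf r) with hC
  set g : Equiv.Perm (Fin n) → Equiv.Perm (Fin n) := fun σ => if C σ then revAt σ r else σ
    with hg
  have hzero : ∀ σ, ¬ C σ → F σ = 0 := by
    intro σ hcond
    have heq : hyb M S σ = hyb M (insert r S) σ := by
      unfold hyb
      congr 1
      apply List.map_congr_left
      intro x hxL
      have hx : x ∈ reps σ := mem_of_mem_sortrev hxL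
      by_cases hxr : x = r
      · subst hxr
        have hord : orderOf (σ.cycleOf x) ≤ 2 := by
          by_contra hlt
          exact hcond ⟨hx, by omega⟩
        rw [if_neg hrS, if_pos (Finset.mem_insert_self x S)]
        exact cycFac_short hM hord
      · simp [Finset.mem_insert, hxr]
    rw [hF]
    simp only [heq, sub_self]
  have hCrev : ∀ σ, C σ → C (revAt σ r) := by
    rintro σ ⟨h1, h2⟩
    refine ⟨by rw [reps_revAt]; exact h1, ?_⟩
    rw [cycleOf_revAt_self, orderOf_inv]
    exact h2
  have hpair : ∀ σ, C σ → F σ + F (revAt σ r) = 0 := by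
    rintro σ ⟨hrreps, hord⟩
    set w : Finset (Fin n) → Equiv.Perm (Fin n) → Fin n → HC :=
      fun S' σ' x => if x ∈ S' then (((cycFac M σ' x).re : ℂ) : HC) else cycFac M σ' x with hw
    set ρ := revAt σ r with hρ
    set q := cycFac M σ r with hq
    set L := ((reps σ).sort (· ≤ ·)).reverse with hL
    have hLρ : ((reps ρ).sort (· ≤ ·)).reverse = L := by rw [hρ, reps_revAt]
    have hrL : r ∈ L := List.mem_reverse.mpr ((Finset.mem_sort (α := Fin n) (· ≤ ·)).mpr hrreps)
    obtain ⟨A, B, hAB⟩ := List.append_of_mem hrL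
    have hnd : (A ++ r :: B).Nodup := by
      rw [← hAB]
      exact List.nodup_reverse.mpr (Finset.sort_nodup _ _)
    have hrA : r ∉ A := fun hmem =>
      (List.disjoint_of_nodup_append hnd) hmem (List.mem_cons_self (a := r) (l := B))
    have hrB : r ∉ B := (List.nodup_cons.mp (List.Nodup.of_append_right hnd)).1
    have hoff : ∀ x, x ∈ A ∨ x ∈ B → cycFac M ρ x = cycFac M σ x ∧ x ≠ r := by
      intro x hx
      have hxL : x ∈ L := by
        rw [hAB]
        rcases hx with h | h
        · exact List.mem_append.mpr (Or.inl h)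
        · exact List.mem_append.mpr (Or.inr (List.mem_cons_of_mem r h))
      have hxreps : x ∈ reps σ := mem_of_mem_sortrev hxL
      have hxr : x ≠ r := by
        rintro rfl
        rcases hx with h | h
        · exact hrA h
        · exact hrB h
      have hnsc : ¬ σ.SameCycle r x := fun hsc =>
        hxr (reps_eq_of_sameCycle hxreps hrreps hsc.symm)
      exact ⟨cycFac_revAt_other hnsc, hxr⟩
    -- the maps over `A` and `B` all agree
    have hwA : ∀ (S' : Finset (Fin n)) (σ' : Equiv.Perm (Fin n)), (σ' = σ ∨ σ' = ρ) →
        (S' = S ∨ S' = insert r S) →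
        (A.map (w S' σ') = A.map (w S σ) ∧ B.map (w S' σ') = B.map (w S σ)) := by
      intro S' σ' hσ' hS'
      constructor <;> apply List.map_congr_left <;> intro x hxAB
      · obtain ⟨hcf, hxr⟩ := hoff x (Or.inl hxAB)
        have hmem : (x ∈ S') = (x ∈ S) := by
          rcases hS' with rfl | rfl
          · rfl
          · simp [Finset.mem_insert, hxr]
        have hcf' : cycFac M σ' x = cycFac M σ x := by
          rcases hσ' with rfl | rfl
          · rfl
          · exact hcf
        simp only [hw, hmem, hcf']
      · obtain ⟨hcf, hxr⟩ := hoff x (Or.inr hxAB)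
        have hmem : (x ∈ S') = (x ∈ S) := by
          rcases hS' with rfl | rfl
          · rfl
          · simp [Finset.mem_insert, hxr]
        have hcf' : cycFac M σ' x = cycFac M σ x := by
          rcases hσ' with rfl | rfl
          · rfl
          · exact hcf
        simp only [hw, hmem, hcf']
    set PA := (A.map (w S σ)).prod with hPA
    set PB := (B.map (w S σ)).prod with hPB
    have hsplit : ∀ (S' : Finset (Fin n)) (σ' : Equiv.Perm (Fin n)), (σ' = σ ∨ σ' = ρ) →
        (S' = S ∨ S' = insert r S) →
        hyb M S' σ' = PA * (w S' σ' r * PB) := by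
      intro S' σ' hσ' hS'
      have hLσ' : ((reps σ').sort (· ≤ ·)).reverse = L := by
        rcases hσ' with rfl | rfl
        · rfl
        · exact hLρ
      obtain ⟨hA, hB⟩ := hwA S' σ' hσ' hS'
      unfold hyb
      rw [hLσ', hAB, List.map_append, List.map_cons, List.prod_append, List.prod_cons,
        hA, hB]
    -- the four middle values
    have hv1 : w S σ r = q := if_neg hrS
    have hv2 : w S ρ r = star q := by
      rw [hw]
      simp only
      rw [if_neg hrS, hρ, cycFac_revAt_self hM, hq]
    have hv3 : w (insert r S) σ r = ((q.re : ℂ) : HC) := by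
      rw [hw]
      simp only
      rw [if_pos (Finset.mem_insert_self r S), hq]
    have hv4 : w (insert r S) ρ r = ((q.re : ℂ) : HC) := by
      rw [hw]
      simp only
      rw [if_pos (Finset.mem_insert_self r S), hρ, cycFac_revAt_self hM, hq,
        QuaternionAlgebra.re_star, zero_mul, add_zero]
    have hsign : ((Equiv.Perm.sign ρ : ℤ) : HC) = ((Equiv.Perm.sign σ : ℤ) : HC) := by
      rw [hρ, sign_revAt]
    rw [hF]
    simp only [hsplit S σ (Or.inl rfl) (Or.inl rfl), hsplit S ρ (Or.inr rfl) (Or.inl rfl),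
      hsplit (insert r S) σ (Or.inl rfl) (Or.inr rfl),
      hsplit (insert r S) ρ (Or.inr rfl) (Or.inr rfl), hv1, hv2, hv3, hv4, hsign]
    have hqs : q + star q = ((q.re : ℂ) : HC) + ((q.re : ℂ) : HC) := by
      rw [QuaternionAlgebra.self_add_star', zero_mul, add_zero, two_mul, QuaternionAlgebra.coe_add]
    have hX : q * PB + star q * PB = ((q.re : ℂ) : HC) * PB + ((q.re : ℂ) : HC) * PB := by
      rw [← add_mul, hqs, add_mul]
    rw [sub_add_sub_comm, ← mul_add, ← mul_add, hX, mul_add PA, mul_add, sub_self]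
  apply Finset.sum_ninvolution g
  · intro σ
    show F σ + F (g σ) = 0
    by_cases hc : C σ
    · have hgσ : g σ = revAt σ r := if_pos hc
      rw [hgσ]
      exact hpair σ hc
    · have hgσ : g σ = σ := if_neg hc
      rw [hgσ, hzero σ hc, add_zero]
  · intro σ hFne
    replace hFne : F σ ≠ 0 := hFne
    by_cases hc : C σ
    · have hgσ : g σ = revAt σ r := if_pos hc
      rw [hgσ]
      exact revAt_ne hc.2
    · exact absurd (hzero σ hc) hFne
  · intro σ
    exact Finset.mem_univ _
  · intro σ
    by_cases hc : C σ
    · have h1 : g σ = revAt σ r := if_pos hc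
      have h2 : C (revAt σ r) := hCrev σ hc
      rw [h1]
      have h3 : g (revAt σ r) = revAt (revAt σ r) r := if_pos h2
      rw [h3]
      exact revAt_revAt σ r
    · have h1 : g σ = σ := if_neg hc
      rw [h1, h1]

lemma sum_permFac_eq_sum_hyb {M : Matrix (Fin n) (Fin n) HC} (hM : IsSelfAdjointQ M)
    (S : Finset (Fin n)) :
    ∑ σ : Equiv.Perm (Fin n), ((Equiv.Perm.sign σ : ℤ) : HC) * permFac M σ
      = ∑ σ : Equiv.Perm (Fin n), ((Equiv.Perm.sign σ : ℤ) : HC) * hyb M S σ := by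
  classical
  induction S using Finset.induction_on with
  | empty => simp only [permFac_eq_hyb]
  | insert _ _ hrS ih => exact ih.trans (hyb_step hM _ _)

lemma list_prod_coe (g : Fin n → ℂ) (l : List (Fin n)) :
    (l.map (fun x => ((g x : ℂ) : HC))).prod = (((l.map g).prod : ℂ) : HC) := by
  induction l with
  | nil => simp [QuaternionAlgebra.coe_one]
  | cons a t ih => simp [ih, QuaternionAlgebra.coe_mul]

lemma list_prod_sortrev_eq_prod (g : Fin n → ℂ) (s : Finset (Fin n)) :
    (((s.sort (· ≤ ·)).reverse.map g).prod) = ∏ x ∈ s, g x := by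
  rw [List.map_reverse, List.prod_reverse]
  have hperm : List.Perm ((s.sort (· ≤ ·)).map g) (s.toList.map g) :=
    (Finset.sort_perm_toList s (· ≤ ·)).map g
  rw [hperm.prod_eq, Finset.prod_eq_multiset_prod]
  conv_rhs => rw [← Multiset.coe_toList s.val, Multiset.map_coe, Multiset.prod_coe]
  rfl

/-- The key identity: for a self-adjoint matrix, the Moore-Dyson determinant equals the sum
over permutations of the product of the (complex) real parts of the cycle factors. -/
lemma Qdet_eq_sum_re {M : Matrix (Fin n) (Fin n) HC} (hM : IsSelfAdjointQ M) :
    Qdet M = ∑ σ : Equiv.Perm (Fin n), ((Equiv.Perm.sign σ : ℤ) : HC)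
      * (((∏ x ∈ reps σ, (cycFac M σ x).re : ℂ)) : HC) := by
  rw [Qdet, sum_permFac_eq_sum_hyb hM Finset.univ]
  refine Finset.sum_congr rfl fun σ _ => ?_
  congr 1
  unfold hyb
  simp only [Finset.mem_univ, if_true]
  rw [list_prod_coe, list_prod_sortrev_eq_prod]

/-! ### Conjugation -/

lemma cycleOf_conj (e σ : Equiv.Perm (Fin n)) (x : Fin n) :
    (e * σ * e⁻¹).cycleOf (e x) = e * σ.cycleOf x * e⁻¹ := by
  ext z
  rw [Equiv.Perm.cycleOf_apply]
  have hcond : (e * σ * e⁻¹).SameCycle (e x) z ↔ σ.SameCycle x (e⁻¹ z) := by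
    rw [Equiv.Perm.sameCycle_conj, show e⁻¹ (e x) = x from e.symm_apply_apply x]
  simp only [Equiv.Perm.mul_apply]
  rw [Equiv.Perm.cycleOf_apply]
  by_cases h : σ.SameCycle x (e⁻¹ z)
  · rw [if_pos (hcond.mpr h), if_pos h]
  · rw [if_neg (fun hc => h (hcond.mp hc)), if_neg h, show e (e⁻¹ z) = z from e.apply_symm_apply z]

lemma orderOf_conj (e c : Equiv.Perm (Fin n)) : orderOf (e * c * e⁻¹) = orderOf c := by
  have : e * c * e⁻¹ = (MulAut.conj e) c := rfl
  rw [this]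
  exact orderOf_injective (MulAut.conj e).toMonoidHom (MulAut.conj e).injective c

lemma conj_pow_apply (e σ : Equiv.Perm (Fin n)) (x : Fin n) (t : ℕ) :
    ((e * σ * e⁻¹) ^ t) (e x) = e ((σ ^ t) x) := by
  rw [conj_pow]
  simp only [Equiv.Perm.mul_apply, Equiv.Perm.inv_def, Equiv.symm_apply_apply]

lemma cycFac_conj (M : Matrix (Fin n) (Fin n) HC) (e σ : Equiv.Perm (Fin n)) (x : Fin n) :
    cycFac (M.submatrix e e) σ x = cycFac M (e * σ * e⁻¹) (e x) := by
  unfold cycFac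
  rw [cycleOf_conj, orderOf_conj]
  refine congrArg _ (List.map_congr_left fun t _ => ?_)
  rw [conj_pow_apply, conj_pow_apply]
  rfl

/-! ### Cycle representatives -/

lemma exists_rep (σ : Equiv.Perm (Fin n)) (z : Fin n) :
    ∃ y, y ∈ reps σ ∧ σ.SameCycle z y := by
  classical
  set O : Finset (Fin n) := Finset.univ.filter (fun w => σ.SameCycle z w) with hO
  have hne : O.Nonempty := ⟨z, by simp [hO, Equiv.Perm.SameCycle.refl]⟩
  refine ⟨O.max' hne, ?_, ?_⟩
  · rw [mem_reps]
    intro w hw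
    have hzy : σ.SameCycle z (O.max' hne) := by
      have h0 := O.max'_mem hne
      simp only [hO, Finset.mem_filter] at h0
      exact h0.2
    have hwO : w ∈ O := by
      simp only [hO, Finset.mem_filter, Finset.mem_univ, true_and]
      exact hzy.trans hw
    exact O.le_max' w hwO
  · have h0 := O.max'_mem hne
    simp only [hO, Finset.mem_filter] at h0
    exact h0.2

/-- The representative of the cycle of `σ` through `z`. -/
noncomputable def repOf (σ : Equiv.Perm (Fin n)) (z : Fin n) : Fin n :=
  (exists_rep σ z).choose

lemma repOf_mem (σ : Equiv.Perm (Fin n)) (z : Fin n) : repOf σ z ∈ reps σ :=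
  (exists_rep σ z).choose_spec.1

lemma repOf_sameCycle (σ : Equiv.Perm (Fin n)) (z : Fin n) : σ.SameCycle z (repOf σ z) :=
  (exists_rep σ z).choose_spec.2

end QdetAux

/-- for a self-adjoint `n × n` matrix `M` over `ℍ_ℂ` and the permutation matrix
`P_{ij}` of the transposition `(i j)`, the matrix `P_{ij} M P_{ij}` (obtained by switching
column `i` with column `j` and row `i` with row `j`) is self-adjoint and has the same
quaternion determinant as `M`. -/
theorem statement6 (n : ℕ) (M : Matrix (Fin n) (Fin n) HC) (hM : IsSelfAdjointQ M)
    (i j : Fin n) :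
    IsSelfAdjointQ (M.submatrix (Equiv.swap i j) (Equiv.swap i j)) ∧
    Qdet (M.submatrix (Equiv.swap i j) (Equiv.swap i j)) = Qdet M := by
  classical
  set e : Equiv.Perm (Fin n) := Equiv.swap i j with he_def
  have hN : IsSelfAdjointQ (M.submatrix e e) := fun a b => hM (e a) (e b)
  refine ⟨hN, ?_⟩
  rw [QdetAux.Qdet_eq_sum_re hN, QdetAux.Qdet_eq_sum_re hM]
  have hinv : e⁻¹ = e := by rw [he_def]; exact Equiv.swap_inv i j
  have hee : ∀ a : Fin n, e (e a) = a := fun a => by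
    rw [he_def]; exact Equiv.swap_apply_self i j a
  refine Fintype.sum_equiv ((Equiv.mulLeft e).trans (Equiv.mulRight e)) _ _ (fun σ => ?_)
  simp only [Equiv.trans_apply, Equiv.coe_mulLeft, Equiv.coe_mulRight]
  set τ := e * σ * e with hτ
  have hττ : e * σ * e⁻¹ = τ := by rw [hinv]
  have hsign : Equiv.Perm.sign τ = Equiv.Perm.sign σ := by
    rw [hτ, _root_.map_mul, _root_.map_mul]
    have : Equiv.Perm.sign e * Equiv.Perm.sign σ * Equiv.Perm.sign e
        = Equiv.Perm.sign σ * (Equiv.Perm.sign e * Equiv.Perm.sign e) := by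
      rw [mul_comm (Equiv.Perm.sign e) (Equiv.Perm.sign σ), mul_assoc]
    rw [this, ← sq, Int.units_sq, mul_one]
  rw [hsign]
  congr 2
  have hcfc : ∀ x, cycFac (M.submatrix e e) σ x = cycFac M τ (e x) := fun x => by
    rw [QdetAux.cycFac_conj M e σ x, hττ]
  have hsc : ∀ a b : Fin n, τ.SameCycle (e a) (e b) ↔ σ.SameCycle a b := by
    intro a b
    rw [← hττ, Equiv.Perm.sameCycle_conj, hinv, hee, hee]
  refine Finset.prod_bij (fun x _ => QdetAux.repOf τ (e x)) ?_ ?_ ?_ ?_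
  · intro x _
    exact QdetAux.repOf_mem τ (e x)
  · intro x1 h1 x2 h2 heq
    have heq' : QdetAux.repOf τ (e x1) = QdetAux.repOf τ (e x2) := heq
    have h12 : τ.SameCycle (e x1) (e x2) :=
      (QdetAux.repOf_sameCycle τ (e x1)).trans
        (heq' ▸ (QdetAux.repOf_sameCycle τ (e x2)).symm)
    exact QdetAux.reps_eq_of_sameCycle h1 h2 ((hsc x1 x2).mp h12)
  · intro y hy
    refine ⟨QdetAux.repOf σ (e y), QdetAux.repOf_mem σ (e y), ?_⟩
    have h1 : σ.SameCycle (e y) (QdetAux.repOf σ (e y)) := QdetAux.repOf_sameCycle σ (e y)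
    have h2 : τ.SameCycle (e (e y)) (e (QdetAux.repOf σ (e y))) := (hsc _ _).mpr h1
    rw [hee y] at h2
    have h3 : τ.SameCycle (QdetAux.repOf τ (e (QdetAux.repOf σ (e y)))) y :=
      (QdetAux.repOf_sameCycle τ _).symm.trans h2.symm
    exact QdetAux.reps_eq_of_sameCycle (QdetAux.repOf_mem τ _) hy h3
  · intro x _
    rw [hcfc x]
    exact (QdetAux.cycFac_re_of_sameCycle M (QdetAux.repOf_sameCycle τ (e x))).symm
end

section
/- Let M be a self-adjoint n×n matrix over ℍ_ℂ, let q ∈ ℍ_ℂ, and let D = diag(1, …, 1, q, 1, …, 1) be the diagonal matrix with q in position i and 1 elsewhere. Then D† M D (the matrix obtained from M by right-multiplying column i by q and left-multiplying row i by q̄, where (D†)_{kl} = conj(D_{lk})) is self-adjoint and Qdet(D† M D) = (q·q̄) · Qdet M. -/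
open Quaternion Matrix

namespace QdetAux

open Equiv Equiv.Perm

lemma star_mul_self_eq (q : HC) : star q * q = q * star q := by
  ext <;> simp <;> ring

lemma coe_comm (z : ℂ) (a : HC) : (z : HC) * a = a * z := QuaternionAlgebra.coe_commutes z a

variable {n : ℕ}

lemma pow_apply_eq_self_iff (σ : Perm (Fin n)) (x : Fin n) {t : ℕ}
    (ht : t < orderOf (σ.cycleOf x)) : (σ ^ t) x = x ↔ t = 0 := by
  constructor
  · intro h
    by_cases hx : σ x = x
    · have h1 : σ.cycleOf x = 1 := (cycleOf_eq_one_iff σ).2 hx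
      rw [h1, orderOf_one] at ht; omega
    · have hc : (σ.cycleOf x).IsCycle := isCycle_cycleOf σ hx
      have hcx : σ.cycleOf x x ≠ x := by rwa [cycleOf_apply_self]
      have h2 : (σ.cycleOf x ^ t) x = x := by rwa [cycleOf_pow_apply_self]
      have h3 : σ.cycleOf x ^ t = 1 := (hc.pow_eq_one_iff' hcx).2 h2
      have := orderOf_dvd_of_pow_eq_one h3
      exact Nat.eq_zero_of_dvd_of_lt this ht
  · rintro rfl; simp

lemma pow_apply_inj (σ : Perm (Fin n)) (x : Fin n) {a b : ℕ}
    (ha : a < orderOf (σ.cycleOf x)) (hb : b < orderOf (σ.cycleOf x))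
    (h : (σ ^ a) x = (σ ^ b) x) : a = b := by
  wlog hab : a ≤ b generalizing a b
  · exact (this hb ha h.symm (le_of_not_ge hab)).symm
  have : (σ ^ a) ((σ ^ (b - a)) x) = (σ ^ a) x := by
    rw [← Equiv.Perm.mul_apply, ← pow_add]
    rw [Nat.add_sub_cancel' hab]
    exact h.symm
  have h2 : (σ ^ (b - a)) x = x := (σ ^ a).injective this
  have := (pow_apply_eq_self_iff σ x (lt_of_le_of_lt (Nat.sub_le _ _) hb)).1 h2
  omega

lemma exists_pow_lt_eq (σ : Perm (Fin n)) {x y : Fin n} (h : σ.SameCycle x y) :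
    ∃ t, t < orderOf (σ.cycleOf x) ∧ (σ ^ t) x = y := by
  obtain ⟨t, _, ht⟩ := Equiv.Perm.SameCycle.exists_pow_eq' h
  refine ⟨t % orderOf (σ.cycleOf x), Nat.mod_lt _ (orderOf_pos _), ?_⟩
  rw [pow_mod_orderOf_cycleOf_apply]; exact ht


open Equiv Equiv.Perm
variable {n : ℕ}

/-- The permutation obtained from `σ` by reversing the cycle of `i`. -/
def Rev (i : Fin n) (σ : Perm (Fin n)) : Perm (Fin n) := ((σ.cycleOf i)⁻¹) ^ 2 * σ

lemma commute_cycleOf (σ : Perm (Fin n)) (i : Fin n) : Commute σ (σ.cycleOf i) := by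
  have : σ * σ.cycleOf i * σ⁻¹ = σ.cycleOf i := by
    ext y
    simp only [Equiv.Perm.mul_apply]
    rw [cycleOf_apply, cycleOf_apply]
    by_cases h : σ.SameCycle i y
    · rw [if_pos h, if_pos (by rwa [Equiv.Perm.inv_def, sameCycle_symm_apply_right])]
      simp
    · rw [if_neg h, if_neg (by rwa [Equiv.Perm.inv_def, sameCycle_symm_apply_right])]
      simp
  have := congrArg (· * σ) this
  exact (by simpa [mul_assoc] using this : σ * σ.cycleOf i = σ.cycleOf i * σ)

lemma cycleOf_fix_zpow {σ : Perm (Fin n)} {i y : Fin n} (h : ¬ σ.SameCycle i y) (t : ℤ) :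
    ((σ.cycleOf i) ^ t) y = y :=
  zpow_apply_eq_self_of_apply_eq_self (cycleOf_apply_of_not_sameCycle h) t

lemma cycleOf_zpow_apply {σ : Perm (Fin n)} {i y : Fin n} (h : σ.SameCycle i y) (t : ℤ) :
    ((σ.cycleOf i) ^ t) y = (σ ^ t) y := by
  rw [h.cycleOf_eq, cycleOf_zpow_apply_self]

lemma Rev_zpow_apply (σ : Perm (Fin n)) (i : Fin n) (t : ℤ) (x : Fin n) :
    ((Rev i σ) ^ t) x = if σ.SameCycle i x then (σ ^ (-t)) x else (σ ^ t) x := by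
  have hcom : Commute (((σ.cycleOf i)⁻¹) ^ 2) σ := ((commute_cycleOf σ i).inv_right.pow_right 2).symm
  have hz : (Rev i σ) ^ t = ((σ.cycleOf i) ^ (-2 * t)) * σ ^ t := by
    rw [Rev, hcom.mul_zpow]
    congr 1
    rw [← zpow_natCast ((σ.cycleOf i)⁻¹) 2, ← _root_.zpow_mul, _root_.inv_zpow, ← _root_.zpow_neg]
    congr 1
    push_cast; ring
  rw [hz, Equiv.Perm.mul_apply]
  by_cases h : σ.SameCycle i x
  · rw [if_pos h]
    have h2 : σ.SameCycle i ((σ ^ t) x) := by rwa [sameCycle_zpow_right]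
    rw [cycleOf_zpow_apply h2, ← Equiv.Perm.mul_apply, ← _root_.zpow_add]
    congr 1; ring
  · rw [if_neg h]
    have h2 : ¬ σ.SameCycle i ((σ ^ t) x) := by rwa [sameCycle_zpow_right]
    exact cycleOf_fix_zpow h2 _

lemma Rev_pow_apply (σ : Perm (Fin n)) (i : Fin n) (t : ℕ) (x : Fin n) :
    ((Rev i σ) ^ t) x = if σ.SameCycle i x then (σ ^ (-(t:ℤ))) x else (σ ^ t) x := by
  have := Rev_zpow_apply σ i t x
  rw [zpow_natCast] at this
  rw [this]
  by_cases h : σ.SameCycle i x <;> simp [h]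

lemma Rev_sameCycle (σ : Perm (Fin n)) (i : Fin n) (x y : Fin n) :
    (Rev i σ).SameCycle x y ↔ σ.SameCycle x y := by
  constructor
  · rintro ⟨t, rfl⟩
    rw [Rev_zpow_apply]
    by_cases h : σ.SameCycle i x
    · rw [if_pos h]; exact ⟨-t, rfl⟩
    · rw [if_neg h]; exact ⟨t, rfl⟩
  · rintro ⟨t, rfl⟩
    by_cases h : σ.SameCycle i x
    · exact ⟨-t, by rw [Rev_zpow_apply, if_pos h, neg_neg]⟩
    · exact ⟨t, by rw [Rev_zpow_apply, if_neg h]⟩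

lemma Rev_cycleOf {σ : Perm (Fin n)} {i x : Fin n} (h : σ.SameCycle i x) :
    (Rev i σ).cycleOf x = (σ.cycleOf x)⁻¹ := by
  rw [cycleOf_inv]
  ext y
  rw [cycleOf_apply, cycleOf_apply]
  by_cases hy : σ.SameCycle x y
  · rw [if_pos ((Rev_sameCycle σ i x y).2 hy), if_pos (by rwa [sameCycle_inv])]
    have h2 : σ.SameCycle i y := h.trans hy
    have := Rev_zpow_apply σ i 1 y
    rw [if_pos h2] at this
    have h3 : (Rev i σ) y = σ⁻¹ y := by simpa using this
    simp [h3]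
  · rw [if_neg (fun hc => hy ((Rev_sameCycle σ i x y).1 hc)), if_neg (by rwa [sameCycle_inv])]

lemma Rev_cycleOf_of_not {σ : Perm (Fin n)} {i x : Fin n} (h : ¬ σ.SameCycle i x) :
    (Rev i σ).cycleOf x = σ.cycleOf x := by
  ext y
  rw [cycleOf_apply, cycleOf_apply]
  by_cases hy : σ.SameCycle x y
  · rw [if_pos ((Rev_sameCycle σ i x y).2 hy), if_pos hy]
    have h2 : ¬ σ.SameCycle i y := fun hc => h (hc.trans hy.symm)
    have := Rev_zpow_apply σ i 1 y
    rw [if_neg h2] at this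
    have h3 : (Rev i σ) y = σ y := by simpa using this
    simp [h3]
  · rw [if_neg (fun hc => hy ((Rev_sameCycle σ i x y).1 hc)), if_neg hy]

lemma Rev_orderOf_cycleOf (σ : Perm (Fin n)) (i x : Fin n) :
    orderOf ((Rev i σ).cycleOf x) = orderOf (σ.cycleOf x) := by
  by_cases h : σ.SameCycle i x
  · rw [Rev_cycleOf h, orderOf_inv]
  · rw [Rev_cycleOf_of_not h]

lemma Rev_involutive (i : Fin n) : Function.Involutive (Rev i) := by
  intro σ
  have h1 : (Rev i σ).cycleOf i = (σ.cycleOf i)⁻¹ := Rev_cycleOf (SameCycle.refl σ i)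
  rw [Rev, h1, Rev]
  group

lemma Rev_sign (σ : Perm (Fin n)) (i : Fin n) : sign (Rev i σ) = sign σ := by
  rw [Rev, _root_.map_mul, map_pow]
  rcases Int.units_eq_one_or (sign (σ.cycleOf i)⁻¹) with h | h <;> rw [h] <;> simp

lemma coe_left_comm (z : ℂ) (a b : HC) : a * ((z:HC) * b) = (z:HC) * (a * b) := by
  rw [← mul_assoc, ← coe_comm, mul_assoc]

lemma telescope (d : Fin n → HC) (ν : Fin n → ℂ)
    (hν : ∀ y, d y * star (d y) = ((ν y : ℂ) : HC))
    (A : ℕ → HC) (g : ℕ → Fin n) :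
    ∀ s, 1 ≤ s →
    ((List.range s).map (fun t => star (d (g t)) * A t * d (g (t+1)))).prod
      = star (d (g 0)) * ((∏ t ∈ Finset.range s, (if t = 0 then 1 else ν (g t)) : ℂ) : HC)
        * ((List.range s).map A).prod * d (g s) := by
  intro s hs
  induction s, hs using Nat.le_induction with
  | base => simp [List.range_succ, mul_assoc]
  | succ s hs ih =>
    simp only [List.range_succ, List.map_append, List.prod_append, List.map_cons, List.map_nil,
      List.prod_cons, List.prod_nil, mul_one]
    rw [ih, Finset.prod_range_succ, if_neg (by omega : ¬ s = 0)]
    simp only [mul_assoc]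
    rw [← mul_assoc (d (g s)) (star (d (g s))), hν (g s)]
    rw [coe_left_comm (ν (g s)) (((List.range s).map A).prod)]
    rw [QuaternionAlgebra.coe_mul]
    simp only [mul_assoc]

lemma star_prod_range (f : ℕ → HC) :
    ∀ s, star ((List.range s).map f).prod
      = ((List.range s).map (fun t => star (f (s - 1 - t)))).prod := by
  intro s
  induction s with
  | zero => simp
  | succ s ih =>
    conv_lhs => rw [List.range_succ]
    rw [List.map_append, List.prod_append]
    simp only [List.map_cons, List.map_nil, List.prod_cons, List.prod_nil, mul_one]
    rw [StarMul.star_mul, ih]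
    conv_rhs => rw [List.range_succ_eq_map]
    simp only [List.map_cons, List.prod_cons, List.map_map, Nat.add_sub_cancel, Nat.sub_zero]
    congr 2
    apply List.map_congr_left
    intro t _
    simp only [Function.comp_apply]
    congr 2
    omega

lemma zpow_neg_eq_pow_sub (σ : Perm (Fin n)) (x : Fin n) {t : ℕ}
    (ht : t ≤ orderOf (σ.cycleOf x)) :
    (σ ^ (-(t:ℤ))) x = (σ ^ (orderOf (σ.cycleOf x) - t)) x := by
  set s := orderOf (σ.cycleOf x) with hsdef
  set c := σ.cycleOf x with hc
  have h1 : (σ ^ (-(t:ℤ))) x = (c ^ (-(t:ℤ))) x := (cycleOf_zpow_apply_self σ x _).symm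
  have h2 : ((σ ^ (s - t) : Perm (Fin n))) x = (c ^ ((s - t : ℕ) : ℤ)) x := by
    rw [zpow_natCast, cycleOf_pow_apply_self]
  rw [h1, h2]
  congr 1
  have hc1 : c ^ ((s:ℤ)) = 1 := by
    rw [zpow_natCast, hsdef, pow_orderOf_eq_one]
  rw [Nat.cast_sub ht, sub_eq_add_neg, _root_.zpow_add, hc1, one_mul]

lemma cycFac_Rev_of_not {M : Matrix (Fin n) (Fin n) HC} {σ : Perm (Fin n)} {i x : Fin n}
    (hx : ¬ σ.SameCycle i x) : cycFac M (Rev i σ) x = cycFac M σ x := by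
  unfold cycFac
  rw [Rev_orderOf_cycleOf]
  congr 1
  apply List.map_congr_left
  intro t _
  rw [Rev_pow_apply, Rev_pow_apply, if_neg hx, if_neg hx]

lemma cycFac_Rev_of_sameCycle {M : Matrix (Fin n) (Fin n) HC} (hM : IsSelfAdjointQ M)
    {σ : Perm (Fin n)} {i x : Fin n} (hx : σ.SameCycle i x) :
    cycFac M (Rev i σ) x = star (cycFac M σ x) := by
  unfold cycFac
  rw [Rev_orderOf_cycleOf, star_prod_range]
  congr 1
  apply List.map_congr_left
  intro t htmem
  rw [List.mem_range] at htmem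
  set s := orderOf (σ.cycleOf x) with hsdef
  have h1 : ((Rev i σ) ^ t) x = (σ ^ (s - t)) x := by
    rw [Rev_pow_apply, if_pos hx, zpow_neg_eq_pow_sub σ x htmem.le]
  have h2 : ((Rev i σ) ^ (t+1)) x = (σ ^ (s - 1 - t)) x := by
    rw [Rev_pow_apply, if_pos hx, zpow_neg_eq_pow_sub σ x (by omega)]
    congr 2
    omega
  have h3 : (s - 1 - t) + 1 = s - t := by omega
  rw [h1, h2, ← hM, h3]

/-! ### The scaled matrix -/

def dv (q : HC) (i : Fin n) : Fin n → HC := fun k => if k = i then q else 1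

noncomputable def nuF (q : HC) (i : Fin n) : Fin n → ℂ := fun y => if y = i then (q * star q).re else 1

lemma dv_mul_star (q : HC) (i y : Fin n) :
    dv q i y * star (dv q i y) = ((nuF q i y : ℂ) : HC) := by
  unfold dv nuF
  by_cases h : y = i
  · simp only [if_pos h]
    exact q.mul_star_eq_coe
  · simp [if_neg h]

section NM

variable {M Nm : Matrix (Fin n) (Fin n) HC} {q : HC} {i : Fin n}
variable (hN : ∀ k l, Nm k l = star (dv q i k) * M k l * dv q i l)

include hN

lemma N_selfAdjoint (hM : IsSelfAdjointQ M) : IsSelfAdjointQ Nm := by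
  intro k l
  rw [hN k l, hN l k, StarMul.star_mul, StarMul.star_mul, star_star, hM k l]
  simp [mul_assoc]

set_option maxHeartbeats 1000000 in
lemma cycFac_N (σ : Perm (Fin n)) (x : Fin n) :
    cycFac Nm σ x = star (dv q i x)
      * ((∏ t ∈ Finset.range (orderOf (σ.cycleOf x)),
          (if t = 0 then 1 else nuF q i ((σ ^ t) x)) : ℂ) : HC)
      * cycFac M σ x * dv q i x := by
  have hs : 1 ≤ orderOf (σ.cycleOf x) := orderOf_pos _
  have hfix : (σ ^ orderOf (σ.cycleOf x)) x = x := by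
    rw [← cycleOf_pow_apply_self, pow_orderOf_eq_one]; rfl
  have h0 : ((σ ^ (0:ℕ)) x) = x := rfl
  have := telescope (dv q i) (nuF q i) (dv_mul_star q i)
    (fun t => M ((σ ^ t) x) ((σ ^ (t + 1)) x)) (fun t => (σ ^ t) x)
    (orderOf (σ.cycleOf x)) hs
  beta_reduce at this
  rw [h0, hfix] at this
  unfold cycFac
  rw [← this]
  apply congrArg
  apply List.map_congr_left
  intro t _
  rw [hN]

omit hN in
lemma Kval (σ : Perm (Fin n)) (x : Fin n) :
    (∏ t ∈ Finset.range (orderOf (σ.cycleOf x)),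
        (if t = 0 then 1 else nuF q i ((σ ^ t) x)) : ℂ)
      = if σ.SameCycle x i ∧ x ≠ i then ((q * star q).re : ℂ) else 1 := by
  by_cases hsc : σ.SameCycle x i
  · by_cases hxi : x = i
    · rw [if_neg (by tauto)]
      apply Finset.prod_eq_one
      intro t htm
      rw [Finset.mem_range] at htm
      by_cases h0 : t = 0
      · rw [if_pos h0]
      · rw [if_neg h0]
        unfold nuF
        rw [if_neg]
        intro he
        rw [← hxi] at he
        exact h0 ((pow_apply_eq_self_iff σ x htm).1 he)
    · rw [if_pos ⟨hsc, hxi⟩]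
      obtain ⟨t₀, ht₀lt, ht₀⟩ := exists_pow_lt_eq σ hsc
      have ht₀0 : t₀ ≠ 0 := by
        rintro rfl
        exact hxi ht₀
      trans (if t₀ = 0 then 1 else nuF q i ((σ ^ t₀) x))
      swap
      · rw [if_neg ht₀0]
        unfold nuF
        rw [if_pos ht₀]
      apply Finset.prod_eq_single t₀
      · intro t htm htne
        rw [Finset.mem_range] at htm
        by_cases h0 : t = 0
        · rw [if_pos h0]
        · rw [if_neg h0]
          unfold nuF
          rw [if_neg]
          intro he
          exact htne (pow_apply_inj σ x htm ht₀lt (he.trans ht₀.symm))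
      · intro habs
        exact absurd (Finset.mem_range.2 ht₀lt) habs
  · rw [if_neg (by tauto)]
    apply Finset.prod_eq_one
    intro t htm
    by_cases h0 : t = 0
    · rw [if_pos h0]
    · rw [if_neg h0]
      unfold nuF
      rw [if_neg]
      intro he
      exact hsc ⟨(t : ℤ), by rw [zpow_natCast]; exact he⟩

lemma cycFac_N_of_not {σ : Perm (Fin n)} {x : Fin n} (hx : ¬ σ.SameCycle i x) :
    cycFac Nm σ x = cycFac M σ x := by
  have hxi : x ≠ i := fun h => hx (h ▸ SameCycle.refl σ i)
  rw [cycFac_N (M := M) hN, Kval, if_neg (by exact fun h => hx h.1.symm)]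
  unfold dv
  rw [if_neg hxi]
  simp

lemma cycFac_N_of_mid {σ : Perm (Fin n)} {x : Fin n} (hx : σ.SameCycle i x) (hxi : x ≠ i) :
    cycFac Nm σ x = (((q * star q).re : ℂ) : HC) * cycFac M σ x := by
  rw [cycFac_N (M := M) hN, Kval, if_pos ⟨hx.symm, hxi⟩]
  unfold dv
  rw [if_neg hxi]
  simp

lemma cycFac_N_at_i (σ : Perm (Fin n)) :
    cycFac Nm σ i = star q * cycFac M σ i * q := by
  rw [cycFac_N (M := M) hN, Kval, if_neg (by tauto)]
  unfold dv
  rw [if_pos rfl]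
  simp

end NM

/-! ### Cycle maxima -/

open scoped Classical in
noncomputable def Sf (σ : Perm (Fin n)) : Finset (Fin n) :=
  Finset.univ.filter (fun x : Fin n => ∀ y : Fin n, σ.SameCycle x y → y ≤ x)

lemma permFac_eq (M : Matrix (Fin n) (Fin n) HC) (σ : Perm (Fin n)) :
    permFac M σ = (((Sf σ).sort (· ≤ ·)).reverse.map (cycFac M σ)).prod := rfl

lemma mem_Sf {σ : Perm (Fin n)} {x : Fin n} :
    x ∈ Sf σ ↔ ∀ y, σ.SameCycle x y → y ≤ x := by simp [Sf]

open scoped Classical in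
noncomputable def mC (σ : Perm (Fin n)) (i : Fin n) : Fin n :=
  (Finset.univ.filter (fun y => σ.SameCycle i y)).max' ⟨i, by simp [SameCycle.refl]⟩

lemma mC_sameCycle (σ : Perm (Fin n)) (i : Fin n) : σ.SameCycle i (mC σ i) := by
  classical
  have h := Finset.max'_mem (Finset.univ.filter (fun y => σ.SameCycle i y))
    ⟨i, by simp [SameCycle.refl]⟩
  rw [Finset.mem_filter] at h
  exact h.2

lemma mC_mem_Sf (σ : Perm (Fin n)) (i : Fin n) : mC σ i ∈ Sf σ := by
  rw [mem_Sf]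
  intro y hy
  apply Finset.le_max'
  rw [Finset.mem_filter]
  exact ⟨Finset.mem_univ _, (mC_sameCycle σ i).trans hy⟩

lemma eq_mC_of {σ : Perm (Fin n)} {i x : Fin n} (hx : ∀ y, σ.SameCycle x y → y ≤ x)
    (hsc : σ.SameCycle i x) : x = mC σ i := by
  refine le_antisymm ?_ (hx _ (hsc.symm.trans (mC_sameCycle σ i)))
  apply Finset.le_max'
  rw [Finset.mem_filter]
  exact ⟨Finset.mem_univ _, hsc⟩

lemma Sf_Rev (σ : Perm (Fin n)) (i : Fin n) : Sf (Rev i σ) = Sf σ := by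
  ext x
  simp only [mem_Sf]
  constructor <;> intro h y hy
  · exact h y ((Rev_sameCycle σ i x y).2 hy)
  · exact h y ((Rev_sameCycle σ i x y).1 hy)

lemma mC_Rev (σ : Perm (Fin n)) (i : Fin n) : mC (Rev i σ) i = mC σ i := by
  apply eq_mC_of
  · intro y hy
    have h := mC_mem_Sf (Rev i σ) i
    rw [mem_Sf] at h
    exact h y ((Rev_sameCycle σ i _ y).2 hy)
  · exact (Rev_sameCycle σ i i _).1 (mC_sameCycle (Rev i σ) i)

lemma exists_decomp (σ : Perm (Fin n)) (i : Fin n) :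
    ∃ L₁ L₂ : List (Fin n),
      ((Sf σ).sort (· ≤ ·)).reverse = L₁ ++ mC σ i :: L₂ ∧
      (∀ x ∈ L₁, ¬ σ.SameCycle i x) ∧ (∀ x ∈ L₂, ¬ σ.SameCycle i x) := by
  have hmem : mC σ i ∈ ((Sf σ).sort (· ≤ ·)).reverse := by
    rw [List.mem_reverse, Finset.mem_sort]
    exact mC_mem_Sf σ i
  obtain ⟨L₁, L₂, hL⟩ := List.append_of_mem hmem
  have hnd : (((Sf σ).sort (· ≤ ·)).reverse).Nodup := List.nodup_reverse.2 (Finset.sort_nodup _ _)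
  rw [hL] at hnd
  obtain ⟨hnd₁, hnd₂, hdisj⟩ := List.nodup_append.1 hnd
  have hm₁ : mC σ i ∉ L₁ := fun h => hdisj _ h _ List.mem_cons_self rfl
  have hm₂ : mC σ i ∉ L₂ := (List.nodup_cons.1 hnd₂).1
  have hSf : ∀ x, x ∈ L₁ ∨ x ∈ L₂ → ¬ σ.SameCycle i x := by
    rintro x hx hsc
    have hxmem : x ∈ ((Sf σ).sort (· ≤ ·)).reverse := by
      rw [hL]
      rcases hx with h | h
      · exact List.mem_append_left _ h
      · exact List.mem_append_right _ (List.mem_cons_of_mem _ h)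
    rw [List.mem_reverse, Finset.mem_sort, mem_Sf] at hxmem
    have := eq_mC_of hxmem hsc
    subst this
    rcases hx with h | h
    · exact hm₁ h
    · exact hm₂ h
  exact ⟨L₁, L₂, hL, fun x h => hSf x (Or.inl h), fun x h => hSf x (Or.inr h)⟩

/-! ### permFac master lemmas -/

lemma sandwich (P₁ P₂ X Y : HC) (z : ℂ) (hXY : X + Y = (z : HC)) :
    P₁ * (X * P₂) + P₁ * (Y * P₂) = (z : HC) * (P₁ * P₂) := by
  rw [← mul_add, ← add_mul, hXY, coe_left_comm]

section Master

variable {M Nm : Matrix (Fin n) (Fin n) HC} {q : HC} {i : Fin n}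

lemma permFac_N_of_ne (hN : ∀ k l, Nm k l = star (dv q i k) * M k l * dv q i l)
    (σ : Perm (Fin n)) (hmi : mC σ i ≠ i) :
    permFac Nm σ = (((q * star q).re : ℂ) : HC) * permFac M σ := by
  obtain ⟨L₁, L₂, hL, h1, h2⟩ := exists_decomp σ i
  rw [permFac_eq, permFac_eq, hL]
  have e1 : L₁.map (cycFac Nm σ) = L₁.map (cycFac M σ) :=
    List.map_congr_left (fun x hx => cycFac_N_of_not (M := M) hN (h1 x hx))
  have e2 : L₂.map (cycFac Nm σ) = L₂.map (cycFac M σ) :=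
    List.map_congr_left (fun x hx => cycFac_N_of_not (M := M) hN (h2 x hx))
  simp only [List.map_append, List.map_cons, List.prod_append, List.prod_cons]
  rw [e1, e2, cycFac_N_of_mid (M := M) hN (mC_sameCycle σ i) hmi]
  simp only [mul_assoc]
  rw [coe_left_comm]

lemma pair_sum (hM : IsSelfAdjointQ M)
    (hN : ∀ k l, Nm k l = star (dv q i k) * M k l * dv q i l)
    (σ : Perm (Fin n)) (hmi : mC σ i = i) :
    permFac Nm σ + permFac Nm (Rev i σ)
      = q * star q * (permFac M σ + permFac M (Rev i σ)) := by
  obtain ⟨L₁, L₂, hL, h1, h2⟩ := exists_decomp σ i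
  have hLrev : ((Sf (Rev i σ)).sort (· ≤ ·)).reverse = L₁ ++ mC σ i :: L₂ := by
    rw [Sf_Rev]; exact hL
  rw [permFac_eq, permFac_eq, permFac_eq, permFac_eq, hL, hLrev, hmi]
  have hRsc : ∀ x, ¬ σ.SameCycle i x → ¬ (Rev i σ).SameCycle i x :=
    fun x h hc => h ((Rev_sameCycle σ i i x).1 hc)
  have e1N : L₁.map (cycFac Nm σ) = L₁.map (cycFac M σ) :=
    List.map_congr_left (fun x hx => cycFac_N_of_not (M := M) hN (h1 x hx))
  have e2N : L₂.map (cycFac Nm σ) = L₂.map (cycFac M σ) :=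
    List.map_congr_left (fun x hx => cycFac_N_of_not (M := M) hN (h2 x hx))
  have e1M : L₁.map (cycFac M (Rev i σ)) = L₁.map (cycFac M σ) :=
    List.map_congr_left (fun x hx => cycFac_Rev_of_not (h1 x hx))
  have e2M : L₂.map (cycFac M (Rev i σ)) = L₂.map (cycFac M σ) :=
    List.map_congr_left (fun x hx => cycFac_Rev_of_not (h2 x hx))
  have e1N' : L₁.map (cycFac Nm (Rev i σ)) = L₁.map (cycFac M σ) :=
    List.map_congr_left (fun x hx => by
      rw [cycFac_N_of_not (M := M) hN (hRsc x (h1 x hx)), cycFac_Rev_of_not (h1 x hx)])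
  have e2N' : L₂.map (cycFac Nm (Rev i σ)) = L₂.map (cycFac M σ) :=
    List.map_congr_left (fun x hx => by
      rw [cycFac_N_of_not (M := M) hN (hRsc x (h2 x hx)), cycFac_Rev_of_not (h2 x hx)])
  have hMi' : cycFac M (Rev i σ) i = star (cycFac M σ i) :=
    cycFac_Rev_of_sameCycle hM (SameCycle.refl σ i)
  have hNi : cycFac Nm σ i = star q * cycFac M σ i * q := cycFac_N_at_i (M := M) hN σ
  have hNi' : cycFac Nm (Rev i σ) i = star q * star (cycFac M σ i) * q := by
    rw [cycFac_N_at_i (M := M) hN (Rev i σ), hMi']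
  simp only [List.map_append, List.map_cons, List.prod_append, List.prod_cons]
  rw [e1N, e2N, e1M, e2M, e1N', e2N', hMi', hNi, hNi']
  set C := cycFac M σ i with hC
  set P₁ := (L₁.map (cycFac M σ)).prod with hP₁
  set P₂ := (L₂.map (cycFac M σ)).prod with hP₂
  obtain ⟨zq, hq⟩ : ∃ z : ℂ, q * star q = (z : HC) := ⟨_, q.mul_star_eq_coe⟩
  obtain ⟨zc, hCC⟩ : ∃ z : ℂ, C + star C = (z : HC) := ⟨_, QuaternionAlgebra.self_add_star' C⟩
  have key : star q * C * q + star q * star C * q = ((zc * zq : ℂ) : HC) := by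
    rw [mul_assoc, mul_assoc, ← mul_add, ← add_mul, hCC, coe_left_comm, star_mul_self_eq, hq,
      ← QuaternionAlgebra.coe_mul]
  calc P₁ * (star q * C * q * P₂) + P₁ * (star q * star C * q * P₂)
      = ((zc * zq : ℂ) : HC) * (P₁ * P₂) := sandwich _ _ _ _ _ key
    _ = q * star q * (P₁ * (C * P₂) + P₁ * (star C * P₂)) := by
        rw [sandwich _ _ _ _ _ hCC, hq]
        conv_rhs => rw [← mul_assoc, ← QuaternionAlgebra.coe_mul]
        rw [mul_comm zq zc]

end Master

end QdetAux

open QdetAux in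
/-- for a self-adjoint `n × n` matrix `M` over `ℍ_ℂ`, `q ∈ ℍ_ℂ`, and the diagonal
matrix `D = diag(1, …, 1, q, 1, …, 1)` with `q` in position `i`, the matrix `D† M D` is
self-adjoint and `Qdet (D† M D) = (q q̄) Qdet M`. -/
theorem statement7 (n : ℕ) (M : Matrix (Fin n) (Fin n) HC) (hM : IsSelfAdjointQ M)
    (q : HC) (i : Fin n) :
    let D : Matrix (Fin n) (Fin n) HC := Matrix.diagonal (fun k => if k = i then q else 1)
    let Ddag : Matrix (Fin n) (Fin n) HC := fun k l => star (D l k)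
    IsSelfAdjointQ (Ddag * M * D) ∧ Qdet (Ddag * M * D) = q * star q * Qdet M := by
  intro D Ddag
  have hD : D = Matrix.diagonal (dv q i) := rfl
  have hDdag2 : Ddag = Matrix.diagonal (fun k => star (dv q i k)) := by
    have h : Ddag = fun k l => star (D l k) := rfl
    rw [h, hD]
    funext k l
    by_cases hkl : k = l
    · subst hkl
      simp
    · simp [Matrix.diagonal_apply_ne _ hkl, Matrix.diagonal_apply_ne _ (Ne.symm hkl)]
  have hN : ∀ k l, (Ddag * M * D) k l = star (dv q i k) * M k l * dv q i l := by
    intro k l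
    rw [hDdag2, hD, Matrix.mul_diagonal, Matrix.diagonal_mul]
  refine ⟨N_selfAdjoint hN hM, ?_⟩
  set Nm := Ddag * M * D with hNm
  have key : ∀ σ : Equiv.Perm (Fin n), permFac Nm σ + permFac Nm (Rev i σ)
      = q * star q * (permFac M σ + permFac M (Rev i σ)) := by
    intro σ
    by_cases hmi : mC σ i = i
    · exact pair_sum hM hN σ hmi
    · rw [permFac_N_of_ne hN σ hmi,
        permFac_N_of_ne hN (Rev i σ) (by rwa [mC_Rev])]
      conv_rhs => rw [q.mul_star_eq_coe, mul_add]
  have hrev : ∀ f : Equiv.Perm (Fin n) → HC,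
      ∑ σ : Equiv.Perm (Fin n), f σ = ∑ σ : Equiv.Perm (Fin n), f (Rev i σ) := by
    intro f
    exact Fintype.sum_bijective (Rev i) (Rev_involutive i).bijective _ _
      (fun σ => by rw [Rev_involutive i σ])
  have hsign : ∀ σ : Equiv.Perm (Fin n),
      ((Equiv.Perm.sign (Rev i σ) : ℤ) : HC) = ((Equiv.Perm.sign σ : ℤ) : HC) := fun σ => by
    rw [Rev_sign]
  have h2 : Qdet Nm + Qdet Nm = q * star q * (Qdet M + Qdet M) := by
    unfold Qdet
    nth_rewrite 2 [hrev (fun σ => ((Equiv.Perm.sign σ : ℤ) : HC) * permFac Nm σ)]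
    nth_rewrite 2 [hrev (fun σ => ((Equiv.Perm.sign σ : ℤ) : HC) * permFac M σ)]
    rw [← Finset.sum_add_distrib, ← Finset.sum_add_distrib, Finset.mul_sum]
    apply Finset.sum_congr rfl
    intro σ _
    rw [hsign σ, ← mul_add, ← mul_add, key σ]
    rw [← mul_assoc, (Int.cast_commute ((Equiv.Perm.sign σ : ℤ)) (q * star q)).eq, mul_assoc]
  have h3 : (2:ℂ) • Qdet Nm = (2:ℂ) • (q * star q * Qdet M) := by
    rw [two_smul, two_smul, h2, mul_add]
  have h4 := congrArg (fun x : HC => ((2:ℂ)⁻¹) • x) h3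
  simpa [smul_smul, inv_mul_cancel₀ (two_ne_zero (α := ℂ))] using h4
end
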